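/- Tensorization of chi-squared divergence: for probability measures ρ_i, σ_i (i = 1,…,n) on measurable spaces Y_i with ρ_i ≪ σ_i, one has 1 + χ²(⊗ρ_i ∥ ⊗σ_i) = ∏_{i=1}^n (1 + χ²(ρ_i ∥ σ_i)). -/
import Mathlib


open MeasureTheory ENNReal
open scoped NNReal

noncomputable def chi2ENN {Y : Type*} [MeasurableSpace Y] (ρ σ : Measure Y) : ℝ≥0∞ :=
  (∫⁻ y, (ρ.rnDeriv σ y) ^ 2 ∂σ) - 1

universe u

lemma lintegral_pi_prod : ∀ (n : ℕ) (Y : Fin n → Type u) [∀ i, MeasurableSpace (Y i)]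
    (σ : ∀ i, Measure (Y i)) [∀ i, SigmaFinite (σ i)] (f : ∀ i, Y i → ℝ≥0∞),
    (∀ i, Measurable (f i)) →
    ∫⁻ x, ∏ i, f i (x i) ∂Measure.pi σ = ∏ i, ∫⁻ y, f i y ∂σ i := by
  intro n
  induction n with
  | zero =>
    intro Y _ σ _ f hf
    simp [lintegral_const]
  | succ n ih =>
    intro Y _ σ _ f hf
    have hmp := measurePreserving_piFinSuccAbove σ 0
    have hF : Measurable fun z : Y 0 × ∀ j : Fin n, Y ((0 : Fin (n+1)).succAbove j) =>
        f 0 z.1 * ∏ j, f ((0 : Fin (n+1)).succAbove j) (z.2 j) := by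
      refine ((hf 0).comp measurable_fst).mul ?_
      exact Finset.measurable_prod _ fun j _ =>
        (hf _).comp ((measurable_pi_apply j).comp measurable_snd)
    have key : ∫⁻ x, ∏ i, f i (x i) ∂Measure.pi σ
        = ∫⁻ z, f 0 z.1 * ∏ j, f ((0 : Fin (n+1)).succAbove j) (z.2 j)
            ∂((σ 0).prod (Measure.pi fun j => σ ((0 : Fin (n+1)).succAbove j))) := by
      rw [← hmp.lintegral_comp hF]
      refine lintegral_congr fun x => ?_
      have : ∏ i, f i (x i) = f 0 (x 0) * ∏ j : Fin n,
          f ((0 : Fin (n+1)).succAbove j) (x ((0 : Fin (n+1)).succAbove j)) := by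
        simpa using Fin.prod_univ_succAbove (fun i => f i (x i)) 0
      rw [this]
      rfl
    have hprod := lintegral_prod_mul (μ := σ 0)
      (ν := Measure.pi fun j => σ ((0 : Fin (n+1)).succAbove j))
      (f := f 0) (g := fun y => ∏ j, f ((0 : Fin (n+1)).succAbove j) (y j))
      (hf 0).aemeasurable
      (Finset.measurable_prod Finset.univ fun j _ =>
        (hf _).comp (measurable_pi_apply j)).aemeasurable
    rw [key, hprod, ih _ _ _ (fun j => hf _)]
    simpa using (Fin.prod_univ_succAbove (fun i => ∫⁻ y, f i y ∂σ i) 0).symm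

lemma two_mul_le_sq_add_one (a : ℝ≥0∞) : 2 * a ≤ a ^ 2 + 1 := by
  induction a using ENNReal.recTopCoe with
  | top => simp
  | coe a =>
    have h : (2 : ℝ≥0) * a ≤ a ^ 2 + 1 := by
      rw [← NNReal.coe_le_coe]
      push_cast
      nlinarith [sq_nonneg ((a : ℝ) - 1)]
    exact_mod_cast h

lemma one_le_lintegral_rnDeriv_sq {Y : Type*} [MeasurableSpace Y] (ρ σ : Measure Y)
    [IsProbabilityMeasure ρ] [IsProbabilityMeasure σ] (hac : ρ ≪ σ) :
    1 ≤ ∫⁻ y, (ρ.rnDeriv σ y) ^ 2 ∂σ := by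
  have h1 : ∫⁻ y, ρ.rnDeriv σ y ∂σ = 1 := by
    rw [Measure.lintegral_rnDeriv hac, measure_univ]
  have h2 : 2 * ∫⁻ y, ρ.rnDeriv σ y ∂σ ≤ (∫⁻ y, (ρ.rnDeriv σ y) ^ 2 ∂σ) + 1 := by
    rw [← lintegral_const_mul 2 (Measure.measurable_rnDeriv ρ σ)]
    calc ∫⁻ y, 2 * ρ.rnDeriv σ y ∂σ ≤ ∫⁻ y, (ρ.rnDeriv σ y) ^ 2 + 1 ∂σ :=
          lintegral_mono fun y => two_mul_le_sq_add_one _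
      _ = (∫⁻ y, (ρ.rnDeriv σ y) ^ 2 ∂σ) + 1 := by
          rw [lintegral_add_right _ measurable_const, lintegral_const, measure_univ, mul_one]
  rw [h1, mul_one] at h2
  have : (1 : ℝ≥0∞) + 1 ≤ (∫⁻ y, (ρ.rnDeriv σ y) ^ 2 ∂σ) + 1 := by
    rw [one_add_one_eq_two]; exact h2
  exact (ENNReal.add_le_add_iff_right one_ne_top).mp this

theorem chi_sq_tensorization (n : ℕ) (Y : Fin n → Type*)
    [∀ i, MeasurableSpace (Y i)]
    (ρ σ : ∀ i, Measure (Y i))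
    [∀ i, IsProbabilityMeasure (ρ i)] [∀ i, IsProbabilityMeasure (σ i)]
    (hac : ∀ i, ρ i ≪ σ i) :
    1 + chi2ENN (Measure.pi ρ) (Measure.pi σ)
      = ∏ i : Fin n, (1 + chi2ENN (ρ i) (σ i)) := by
  set f : ∀ i, Y i → ℝ≥0∞ := fun i => (ρ i).rnDeriv (σ i) with hf_def
  have hf : ∀ i, Measurable (f i) := fun i => Measure.measurable_rnDeriv _ _
  have hg : Measurable fun x : ∀ i, Y i => ∏ i, f i (x i) :=
    Finset.measurable_prod _ fun i _ => (hf i).comp (measurable_pi_apply i)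
  -- Step 1: pi ρ = (pi σ).withDensity (∏ f i)
  have hpi : Measure.pi ρ = (Measure.pi σ).withDensity fun x => ∏ i, f i (x i) := by
    refine Measure.pi_eq fun s hs => ?_
    rw [withDensity_apply _ (MeasurableSet.univ_pi hs),
      ← lintegral_indicator (MeasurableSet.univ_pi hs)]
    have hind : ∀ x, (Set.univ.pi s).indicator (fun x => ∏ i, f i (x i)) x
        = ∏ i, (s i).indicator (f i) (x i) := by
      intro x
      by_cases hx : x ∈ Set.univ.pi s
      · rw [Set.indicator_of_mem hx]
        exact Finset.prod_congr rfl fun i _ =>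
          (Set.indicator_of_mem (hx i (Set.mem_univ i)) _).symm
      · rw [Set.indicator_of_notMem hx]
        obtain ⟨i, hi⟩ : ∃ i, x i ∉ s i := by simpa [Set.mem_pi] using hx
        exact (Finset.prod_eq_zero (Finset.mem_univ i)
          (Set.indicator_of_notMem hi _)).symm
    rw [lintegral_congr hind,
      lintegral_pi_prod n Y σ _ (fun i => (hf i).indicator (hs i))]
    refine Finset.prod_congr rfl fun i _ => ?_
    rw [lintegral_indicator (hs i) _, Measure.setLIntegral_rnDeriv (hac i)]
  -- Step 2: rnDeriv of the product
  have hrn : (Measure.pi ρ).rnDeriv (Measure.pi σ)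
      =ᵐ[Measure.pi σ] fun x => ∏ i, f i (x i) := by
    rw [hpi]
    exact Measure.rnDeriv_withDensity _ hg
  -- Step 3: lintegral of square tensorizes
  have hsq : ∫⁻ x, ((Measure.pi ρ).rnDeriv (Measure.pi σ) x) ^ 2 ∂Measure.pi σ
      = ∏ i, ∫⁻ y, (f i y) ^ 2 ∂σ i := by
    have : ∫⁻ x, ((Measure.pi ρ).rnDeriv (Measure.pi σ) x) ^ 2 ∂Measure.pi σ
        = ∫⁻ x, (∏ i, f i (x i)) ^ 2 ∂Measure.pi σ :=
      lintegral_congr_ae (hrn.mono fun x hx => by simp only [hx])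
    rw [this]
    have : ∀ x : ∀ i, Y i, (∏ i, f i (x i)) ^ 2 = ∏ i, (f i (x i)) ^ 2 := fun x =>
      (Finset.prod_pow _ 2 _).symm
    simp_rw [this]
    exact lintegral_pi_prod n Y σ _ (fun i => (hf i).pow_const 2)
  have hone : ∀ i, 1 ≤ ∫⁻ y, (f i y) ^ 2 ∂σ i := fun i =>
    one_le_lintegral_rnDeriv_sq (ρ i) (σ i) (hac i)
  have honepi : (1 : ℝ≥0∞) ≤ ∏ i, ∫⁻ y, (f i y) ^ 2 ∂σ i :=
    Finset.one_le_prod' fun i _ => hone i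
  unfold chi2ENN
  rw [hsq, add_tsub_cancel_of_le honepi]
  exact Finset.prod_congr rfl fun i _ => (add_tsub_cancel_of_le (hone i)).symm
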